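/- Let N be even, σ(0) = # 0^{N-1}, σ(1) = # 1^{N-1}, and let s be an infinite binary word with abelian critical exponent A(s) = θ' > 0. Then the abelian critical exponent of σ(s) equals θ'/N. -/

import Mathlib

set_option linter.unusedSectionVars false
set_option maxHeartbeats 1000000



open Filter ENNReal

/-- Abelian equivalence of words: each letter occurs equally often. -/
def AbEq {A : Type*} [DecidableEq A] (u v : List A) : Prop :=
  ∀ a : A, u.count a = v.count a

/-- `u` occurs as a (contiguous) factor of the infinite word `x`. -/
def OccursIn {A : Type*} (x : ℕ → A) (u : List A) : Prop :=
  ∃ i, u = (List.range u.length).map fun j => x (i + j)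

/-- An abelian power of exponent `e` and period `m` occurs in `x`. -/
def IsAbPow {A : Type*} [DecidableEq A] (x : ℕ → A) (e m : ℕ) : Prop :=
  0 < e ∧ 0 < m ∧ ∃ u : ℕ → List A,
    (∀ i < e, (u i).length = m) ∧
    (∀ i < e, AbEq (u i) (u 0)) ∧
    OccursIn x (((List.range e).map u).flatten)

/-- The supremum of exponents of abelian powers of period `m` occurring in `x`. -/
noncomputable def AbExpSup {A : Type*} [DecidableEq A] (x : ℕ → A) (m : ℕ) : ℝ≥0∞ :=
  ⨆ e ∈ {e : ℕ | IsAbPow x e m}, (e : ℝ≥0∞)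

/-- The abelian critical exponent of an infinite word. -/
noncomputable def AbCritExp {A : Type*} [DecidableEq A] (x : ℕ → A) : ℝ≥0∞ :=
  Filter.atTop.limsup fun m : ℕ => AbExpSup x m / (m : ℝ≥0∞)

/-- The `N`-uniform substitution `σ(0) = # 0^{N-1}`, `σ(1) = # 1^{N-1}`,
with `# = 2` in `Fin 3`. -/
def sigmaLetter (N : ℕ) (a : Fin 2) : List (Fin 3) :=
  (2 : Fin 3) :: List.replicate (N - 1) a.castSucc

/-- `σ(w)`, applying `σ` letterwise to the infinite binary word `w`. -/
def sigmaWord (N : ℕ) (w : ℕ → Fin 2) (n : ℕ) : Fin 3 :=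
  (sigmaLetter N (w (n / N))).getD (n % N) 0


namespace AbAux


variable {A : Type*} [DecidableEq A]

/-- Segment of an infinite word. -/
def seg (x : ℕ → A) (p len : ℕ) : List A := (List.range len).map fun j => x (p + j)

@[simp] lemma seg_length (x : ℕ → A) (p len : ℕ) : (seg x p len).length = len := by
  simp [seg]

lemma seg_add (x : ℕ → A) (p l1 l2 : ℕ) :
    seg x p (l1 + l2) = seg x p l1 ++ seg x (p + l1) l2 := by
  simp [seg, List.range_add, Function.comp, add_assoc]

lemma seg_succ (x : ℕ → A) (p l : ℕ) :
    seg x p (l + 1) = seg x p l ++ [x (p + l)] := by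
  rw [seg_add]
  congr 1

/-- counts of a letter in a segment -/
def cnt (x : ℕ → A) (a : A) (p len : ℕ) : ℕ := (seg x p len).count a

lemma cnt_add (x : ℕ → A) (a : A) (p l1 l2 : ℕ) :
    cnt x a p (l1 + l2) = cnt x a p l1 + cnt x a (p + l1) l2 := by
  simp [cnt, seg_add, List.count_append]

lemma cnt_succ (x : ℕ → A) (a : A) (p l : ℕ) :
    cnt x a p (l + 1) = cnt x a p l + (if x (p + l) = a then 1 else 0) := by
  rw [cnt, seg_succ, List.count_append, cnt]
  simp [List.count_singleton', beq_iff_eq]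

lemma occursIn_seg (x : ℕ → A) (p len : ℕ) : OccursIn x (seg x p len) := by
  exact ⟨p, by simp [seg]⟩

lemma flatten_seg (x : ℕ → A) (p m : ℕ) : ∀ e,
    (((List.range e).map (fun i => seg x (p + i * m) m)).flatten) = seg x p (e * m) := by
  intro e
  induction e with
  | zero => simp [seg]
  | succ e ih =>
    rw [List.range_succ, List.map_append, List.flatten_append, ih]
    simp only [List.map_cons, List.map_nil, List.flatten_cons, List.flatten_nil, List.append_nil]
    rw [Nat.succ_mul, seg_add]

lemma isAbPow_of_cnt {x : ℕ → A} {e m p : ℕ} (he : 0 < e) (hm : 0 < m)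
    (h : ∀ i < e, ∀ a, cnt x a (p + i * m) m = cnt x a p m) : IsAbPow x e m := by
  refine ⟨he, hm, fun i => seg x (p + i * m) m, fun i _ => seg_length _ _ _, ?_, ?_⟩
  · intro i hi a
    simp only [zero_mul, add_zero]
    have := (h i hi a).trans (h 0 he a).symm
    simpa [cnt, zero_mul, add_zero] using this
  · rw [flatten_seg]
    exact occursIn_seg x p (e * m)

lemma chunks_eq {x : ℕ → A} {m p : ℕ} : ∀ (e : ℕ) (u : ℕ → List A),
    (∀ i < e, (u i).length = m) →
    ((List.range e).map u).flatten = seg x p (e * m) →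
    ∀ i < e, u i = seg x (p + i * m) m := by
  intro e
  induction e with
  | zero => intro u _ _ i hi; omega
  | succ e ih =>
    intro u hlen hfl i hi
    rw [List.range_succ, List.map_append, List.flatten_append, Nat.succ_mul, seg_add] at hfl
    simp only [List.map_cons, List.map_nil, List.flatten_cons, List.flatten_nil,
      List.append_nil] at hfl
    have hl1 : (((List.range e).map u).flatten).length = (seg x p (e * m)).length := by
      simp only [seg_length]
      rw [List.length_flatten]
      rw [List.map_map]
      have : ∀ l ∈ List.range e, (List.length ∘ u) l = m := by
        intro l hl; simp only [Function.comp]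
        exact hlen l (by simp at hl; omega)
      rw [List.map_congr_left this]
      simp [List.sum_replicate, List.map_const']
    have := List.append_inj hfl hl1
    rcases this with ⟨h1, h2⟩
    rcases Nat.lt_or_ge i e with hie | hie
    · exact ih u (fun j hj => hlen j (by omega)) h1 i hie
    · have : i = e := by omega
      subst this
      exact h2

lemma cnt_of_isAbPow {x : ℕ → A} {e m : ℕ} (h : IsAbPow x e m) :
    ∃ p, ∀ i < e, ∀ a, cnt x a (p + i * m) m = cnt x a p m := by
  obtain ⟨he, hm, u, hlen, habe, p, hocc⟩ := h
  have hL : (((List.range e).map u).flatten).length = e * m := by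
    rw [List.length_flatten, List.map_map]
    have : ∀ l ∈ List.range e, (List.length ∘ u) l = m := by
      intro l hl; exact hlen l (by simpa using hl)
    rw [List.map_congr_left this]
    simp [List.map_const']
  rw [hL] at hocc
  have hocc' : ((List.range e).map u).flatten = seg x p (e * m) := hocc
  have hch := chunks_eq e u hlen hocc'
  refine ⟨p, fun i hi a => ?_⟩
  have h1 := hch i hi
  have h0 := hch 0 he
  have := habe i hi a
  rw [h1, h0] at this
  simpa [cnt] using this


variable (N : ℕ) (s : ℕ → Fin 2)


lemma sigma_apply (hN : 2 ≤ N) (n : ℕ) :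
    sigmaWord N s n = if n % N = 0 then 2 else (s (n / N)).castSucc := by
  unfold sigmaWord sigmaLetter
  rcases Nat.eq_zero_or_pos (n % N) with h | h
  · simp [h]
  · have hlt : n % N - 1 < N - 1 := by
      have := Nat.mod_lt n (show 0 < N by omega); omega
    obtain ⟨j, hj⟩ : ∃ j, n % N = j + 1 := ⟨n % N - 1, by omega⟩
    rw [hj]
    simp only [List.getD_cons_succ, if_neg (by omega : ¬ n % N = 0)]
    rw [List.getD_eq_getElem?_getD, List.getElem?_replicate]
    rw [if_pos (by omega)]
    rfl

lemma fin2_count (l : List (Fin 2)) : l.count 0 + l.count 1 = l.length := by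
  induction l with
  | nil => simp
  | cons a t ih => fin_cases a <;> simp [List.count_cons] <;> omega

lemma fin3_count (l : List (Fin 3)) : l.count 0 + l.count 1 + l.count 2 = l.length := by
  induction l with
  | nil => simp
  | cons a t ih => fin_cases a <;> simp [List.count_cons] <;> omega


lemma castSucc_ne_two (a : Fin 2) : a.castSucc ≠ 2 := by fin_cases a <;> decide
lemma castSucc_eq_zero (a : Fin 2) : a.castSucc = 0 ↔ a = 0 := by fin_cases a <;> decide

lemma fin3_cases (a : Fin 3) : a = 0 ∨ a = 1 ∨ a = 2 := by
  rcases a with ⟨v, hv⟩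
  interval_cases v <;> simp [Fin.ext_iff]

lemma fin2_cases (a : Fin 2) : a = 0 ∨ a = 1 := by
  rcases a with ⟨v, hv⟩
  interval_cases v <;> simp [Fin.ext_iff]

lemma ind2 (hN : 2 ≤ N) (q : ℕ) :
    (if sigmaWord N s q = 2 then 1 else 0) = (if q % N = 0 then 1 else 0) := by
  rw [sigma_apply N s hN]
  rcases Nat.eq_zero_or_pos (q % N) with h | h
  · simp [h]
  · have h' : ¬ q % N = 0 := by omega
    simp [h', castSucc_ne_two]

lemma ind0 (hN : 2 ≤ N) (q : ℕ) :
    (if sigmaWord N s q = 0 then 1 else 0)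
      = (if q % N = 0 then 0 else (if s (q / N) = 0 then 1 else 0)) := by
  rw [sigma_apply N s hN]
  rcases Nat.eq_zero_or_pos (q % N) with h | h
  · simp [h]
  · have h' : ¬ q % N = 0 := by omega
    simp [h', castSucc_eq_zero]

/-- prefix count of the marker letter 2 -/
lemma pref2 (hN : 2 ≤ N) (q : ℕ) :
    cnt (sigmaWord N s) 2 0 q = (q + (N - 1)) / N := by
  induction q with
  | zero => simp [cnt, seg]; rw [Nat.div_eq_of_lt (by omega)]
  | succ q ih =>
    rw [cnt_succ, ih, zero_add, ind2 N s hN]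
    obtain ⟨c, r, hq, hr⟩ : ∃ c r, q = N * c + r ∧ r < N :=
      ⟨q / N, q % N, (Nat.div_add_mod q N).symm, Nat.mod_lt _ (by omega)⟩
    subst hq
    have hmod : (N * c + r) % N = r := by
      rw [Nat.mul_add_mod]; exact Nat.mod_eq_of_lt hr
    rw [hmod]
    have h1 : (N * c + r + 1 + (N - 1)) = N * c + (r + N) := by omega
    have h2 : (N * c + r + (N - 1)) = N * c + (r + (N - 1)) := by omega
    rw [h1, h2, Nat.mul_add_div (by omega), Nat.mul_add_div (by omega)]
    have h3 : (r + N) / N = 1 := Nat.div_eq_of_lt_le (by omega) (by omega)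
    rw [h3]
    rcases Nat.eq_zero_or_pos r with h | h
    · subst h
      rw [if_pos rfl, Nat.div_eq_of_lt (by omega)]
    · have h4 : (r + (N - 1)) / N = 1 := Nat.div_eq_of_lt_le (by omega) (by omega)
      rw [if_neg (by omega), h4]

/-- prefix count of letter 0 in σ(s) -/
lemma pref0 (hN : 2 ≤ N) (q : ℕ) :
    cnt (sigmaWord N s) 0 0 q
      = (N - 1) * cnt s 0 0 (q / N) + (q % N - 1) * (if s (q / N) = 0 then 1 else 0) := by
  induction q with
  | zero => simp [cnt, seg]
  | succ q ih =>
    rw [cnt_succ, ih, zero_add, ind0 N s hN]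
    obtain ⟨c, r, hq, hr⟩ : ∃ c r, q = N * c + r ∧ r < N :=
      ⟨q / N, q % N, (Nat.div_add_mod q N).symm, Nat.mod_lt _ (by omega)⟩
    subst hq
    have hmod : (N * c + r) % N = r := by
      rw [Nat.mul_add_mod]; exact Nat.mod_eq_of_lt hr
    have hdiv : (N * c + r) / N = c := by
      rw [Nat.mul_add_div (by omega), Nat.div_eq_of_lt hr, Nat.add_zero]
    rw [hmod, hdiv]
    rcases Nat.lt_or_ge (r + 1) N with hrN | hrN
    · have hmod' : (N * c + r + 1) % N = r + 1 := by
        rw [Nat.add_assoc, Nat.mul_add_mod]; exact Nat.mod_eq_of_lt hrN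
      have hdiv' : (N * c + r + 1) / N = c := by
        rw [Nat.add_assoc, Nat.mul_add_div (by omega), Nat.div_eq_of_lt hrN, Nat.add_zero]
      rw [hmod', hdiv']
      by_cases hs : s c = 0
      · simp only [if_pos hs, mul_one]
        set P := (N - 1) * cnt s 0 0 c with hP
        rcases Nat.eq_zero_or_pos r with h0 | h0
        · subst h0; rw [if_pos rfl] <;> omega
        · rw [if_neg (by omega)]; omega
      · simp only [if_neg hs, mul_zero]
        set P := (N - 1) * cnt s 0 0 c with hP
        rcases Nat.eq_zero_or_pos r with h0 | h0
        · subst h0; rw [if_pos rfl] <;> omega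
        · rw [if_neg (by omega)]; omega
    · have hrN' : r = N - 1 := by omega
      have he : N * c + r + 1 = N * (c + 1) := by rw [Nat.mul_add]; omega
      have hmod' : (N * c + r + 1) % N = 0 := by rw [he, Nat.mul_mod_right]
      have hdiv' : (N * c + r + 1) / N = c + 1 := by
        rw [he, Nat.mul_div_cancel_left _ (show 0 < N by omega)]
      rw [hmod', hdiv']
      have hS : cnt s 0 0 (c + 1) = cnt s 0 0 c + (if s (0 + c) = 0 then 1 else 0) := by
        rw [cnt_succ]
      rw [hS, zero_add, Nat.mul_add]
      rw [if_neg (by omega : ¬ r = 0)]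
      have hz : (0 - 1 : ℕ) = 0 := rfl
      rw [hz, zero_mul, add_zero]
      by_cases hs : s c = 0
      · simp only [if_pos hs, mul_one]
        set P := (N - 1) * cnt s 0 0 c with hP
        omega
      · simp only [if_neg hs, mul_zero]
        set P := (N - 1) * cnt s 0 0 c with hP
        omega


-- PART 3 --

lemma div_add_le (hN : 0 < N) (a b : ℕ) : a / N + b / N ≤ (a + b) / N := by
  rw [Nat.add_div hN]; split <;> omega

lemma div_add_ge (hN : 0 < N) (a b : ℕ) : (a + b) / N ≤ a / N + b / N + 1 := by
  rw [Nat.add_div hN]; split <;> omega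

/-- the marker-count of any window whose length is a multiple of N is exact -/
lemma cnt2_window (hN : 2 ≤ N) (q k : ℕ) : cnt (sigmaWord N s) 2 q (k * N) = k := by
  have h := cnt_add (sigmaWord N s) 2 0 q (k * N)
  rw [zero_add, pref2 N s hN, pref2 N s hN] at h
  have h2 : (q + k * N + (N - 1)) / N = (q + (N - 1)) / N + k := by
    rw [show q + k * N + (N - 1) = q + (N - 1) + k * N by omega,
      Nat.add_mul_div_right _ _ (show 0 < N by omega)]
  omega

lemma cnt0_window (hN : 2 ≤ N) (c k : ℕ) :
    cnt (sigmaWord N s) 0 (c * N) (k * N) = (N - 1) * cnt s 0 c k := by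
  have h := cnt_add (sigmaWord N s) 0 0 (c * N) (k * N)
  rw [zero_add, pref0 N s hN, pref0 N s hN] at h
  rw [show c * N + k * N = (c + k) * N by ring] at h
  have hdc : ∀ a : ℕ, a * N / N = a := fun a => by
    simp [Nat.mul_div_cancel_left, (show 0 < N by omega)]
  rw [hdc, Nat.mul_mod_left, hdc, Nat.mul_mod_left] at h
  have hS : cnt s 0 0 (c + k) = cnt s 0 0 c + cnt s 0 c k := by
    have := cnt_add s 0 0 c k
    rwa [zero_add] at this
  rw [hS, Nat.mul_add] at h
  have hz : (0 - 1 : ℕ) = 0 := rfl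
  rw [hz, zero_mul, add_zero, zero_mul, add_zero] at h
  set P := (N - 1) * cnt s 0 0 c with hP
  set Q := (N - 1) * cnt s 0 c k with hQ
  omega

/-- direction s → σ(s) -/
lemma isAbPow_sigma_of (hN : 2 ≤ N) {e k : ℕ} (h : IsAbPow s e k) :
    IsAbPow (sigmaWord N s) e (k * N) := by
  obtain ⟨p, hp⟩ := cnt_of_isAbPow h
  obtain ⟨he, hk, -⟩ := h
  apply isAbPow_of_cnt he (Nat.mul_pos hk (by omega)) (p := p * N)
  intro i hi a
  have hpos : p * N + i * (k * N) = (p + i * k) * N := by ring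
  rw [hpos]
  rcases fin3_cases a with rfl | rfl | rfl
  · rw [cnt0_window N s hN, cnt0_window N s hN, hp i hi 0]
  · -- letter 1: use complement
    have h3a := fin3_count (seg (sigmaWord N s) ((p + i * k) * N) (k * N))
    have h3b := fin3_count (seg (sigmaWord N s) (p * N) (k * N))
    rw [seg_length] at h3a h3b
    have e0 : cnt (sigmaWord N s) 0 ((p + i * k) * N) (k * N)
        = cnt (sigmaWord N s) 0 (p * N) (k * N) := by
      rw [cnt0_window N s hN, cnt0_window N s hN, hp i hi 0]
    have e2a := cnt2_window N s hN ((p + i * k) * N) k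
    have e2b := cnt2_window N s hN (p * N) k
    unfold cnt at *
    omega
  · rw [cnt2_window N s hN, cnt2_window N s hN]


/-- ℤ-helper for the parity argument -/
lemma parity_helper (n B d t : ℤ) (hodd : Odd n) (hn : 0 < n) (hB0 : 0 ≤ B) (hBn : B < n)
    (ht1 : -2 ≤ t) (ht2 : t ≤ 2) (heq : n * d = B * t) : d = 0 := by
  have hBt1 : B * t ≤ 2 * B := by nlinarith
  have hBt2 : -(2 * B) ≤ B * t := by nlinarith
  have hd1 : d ≤ 1 := by nlinarith
  have hd2 : -1 ≤ d := by nlinarith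
  obtain ⟨j, hj⟩ := hodd
  interval_cases d
  · exfalso; interval_cases t <;> omega
  · rfl
  · exfalso; interval_cases t <;> omega

/-- direction σ(s) → s, N even -/
lemma isAbPow_of_sigma (hN : 2 ≤ N) (hNe : Even N) {e k : ℕ}
    (h : IsAbPow (sigmaWord N s) e (k * N)) : IsAbPow s e k := by
  obtain ⟨p, hp⟩ := cnt_of_isAbPow h
  obtain ⟨he, hm, -⟩ := h
  have hk : 0 < k := by
    rcases Nat.eq_zero_or_pos k with h0 | h0
    · subst h0; simp at hm
    · exact h0
  set c := p / N with hc
  set b := p % N with hb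
  have hbN : b < N := Nat.mod_lt _ (by omega)
  have hpcb : p = c * N + b := by
    rw [hc, hb, Nat.mul_comm]
    exact (Nat.div_add_mod p N).symm
  set D := cnt (sigmaWord N s) 0 p (k * N) with hD
  have hdiv : ∀ a : ℕ, (a * N + b) / N = a := by
    intro a
    rw [Nat.add_comm, Nat.add_mul_div_right _ _ (show 0 < N by omega),
      Nat.div_eq_of_lt hbN, Nat.zero_add]
  have hmod : ∀ a : ℕ, (a * N + b) % N = b := by
    intro a
    rw [Nat.add_comm, Nat.add_mul_mod_self_right]
    exact Nat.mod_eq_of_lt hbN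
  have key : ∀ i < e, (b - 1) * (if s (c + i * k) = 0 then 1 else 0) + D
      = (N - 1) * cnt s 0 (c + i * k) k
        + (b - 1) * (if s (c + (i + 1) * k) = 0 then 1 else 0) := by
    intro i hi
    have hcnt : cnt (sigmaWord N s) 0 (p + i * (k * N)) (k * N) = D := hp i hi 0
    have hadd := cnt_add (sigmaWord N s) 0 0 (p + i * (k * N)) (k * N)
    rw [zero_add, hcnt] at hadd
    have h1 : p + i * (k * N) = (c + i * k) * N + b := by rw [hpcb]; ring
    have h2 : p + i * (k * N) + k * N = (c + (i + 1) * k) * N + b := by rw [hpcb]; ring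
    rw [h2, h1, pref0 N s hN, pref0 N s hN, hdiv, hdiv, hmod, hmod] at hadd
    have hS : cnt s 0 0 (c + (i + 1) * k) = cnt s 0 0 (c + i * k) + cnt s 0 (c + i * k) k := by
      have h3 := cnt_add s 0 0 (c + i * k) k
      rw [zero_add] at h3
      rw [show c + (i + 1) * k = c + i * k + k by ring]
      exact h3
    rw [hS, Nat.mul_add] at hadd
    set P := (N - 1) * cnt s 0 0 (c + i * k)
    set Q := (N - 1) * cnt s 0 (c + i * k) k
    set R1 := (b - 1) * (if s (c + i * k) = 0 then 1 else 0)
    set R2 := (b - 1) * (if s (c + (i + 1) * k) = 0 then 1 else 0)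
    omega
  have main : ∀ i < e, cnt s 0 (c + i * k) k = cnt s 0 c k := by
    intro i hi
    have k0 := key 0 he
    have ki := key i hi
    rw [show c + 0 * k = c by ring, show (0 + 1) * k = k by ring] at k0
    have ki' := congrArg (Nat.cast : ℕ → ℤ) ki
    have k0' := congrArg (Nat.cast : ℕ → ℤ) k0
    push_cast at ki' k0'
    set x1 : ℤ := if s (c + i * k) = 0 then 1 else 0 with hx1
    set x2 : ℤ := if s (c + (i + 1) * k) = 0 then 1 else 0 with hx2
    set x3 : ℤ := if s c = 0 then 1 else 0 with hx3
    set x4 : ℤ := if s (c + k) = 0 then 1 else 0 with hx4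
    have hx1' : 0 ≤ x1 ∧ x1 ≤ 1 := by rw [hx1]; split <;> omega
    have hx2' : 0 ≤ x2 ∧ x2 ≤ 1 := by rw [hx2]; split <;> omega
    have hx3' : 0 ≤ x3 ∧ x3 ≤ 1 := by rw [hx3]; split <;> omega
    have hx4' : 0 ≤ x4 ∧ x4 ≤ 1 := by rw [hx4]; split <;> omega
    have hN1 : ((N - 1 : ℕ) : ℤ) = (N : ℤ) - 1 := by
      have : 1 ≤ N := by omega
      push_cast [this]
      ring
    rw [hN1] at ki' k0'
    have hd0 : ((cnt s 0 (c + i * k) k : ℤ) - cnt s 0 c k) = 0 := by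
      refine parity_helper ((N : ℤ) - 1) (((b - 1 : ℕ) : ℤ)) _
        ((x1 + x4) - (x2 + x3)) ?_ ?_ ?_ ?_ ?_ ?_ ?_
      · obtain ⟨w, hw⟩ := hNe
        have hw' : (N : ℤ) = (w : ℤ) + w := by exact_mod_cast congrArg (Nat.cast : ℕ → ℤ) hw
        exact ⟨(w : ℤ) - 1, by omega⟩
      · omega
      · positivity
      · have hb2 : (b - 1 : ℕ) ≤ N - 2 := by omega
        have := (Nat.cast_le (α := ℤ)).2 hb2
        have hN2 : ((N - 2 : ℕ) : ℤ) = (N : ℤ) - 2 := by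
          have : 2 ≤ N := hN
          push_cast [this]; ring
        omega
      · omega
      · omega
      · linear_combination k0' - ki'
    omega
  apply isAbPow_of_cnt he hk (p := c)
  intro i hi a
  rcases fin2_cases a with rfl | rfl
  · exact main i hi
  · have h2a := fin2_count (seg s (c + i * k) k)
    have h2b := fin2_count (seg s c k)
    rw [seg_length] at h2a h2b
    have := main i hi
    unfold cnt at *
    omega

/-- if the period is not a multiple of N, the exponent is at most N -/
lemma exponent_le (hN : 2 ≤ N) {e m : ℕ} (hndvd : ¬ N ∣ m)
    (h : IsAbPow (sigmaWord N s) e m) : e ≤ N := by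
  obtain ⟨p, hp⟩ := cnt_of_isAbPow h
  obtain ⟨he, hm, -⟩ := h
  set A := p + (N - 1) with hA
  set δ := cnt (sigmaWord N s) 2 p m with hδ
  set q := m / N with hq
  set r := m % N with hr
  have hrm : m = N * q + r := by rw [hq, hr]; exact (Nat.div_add_mod m N).symm
  have hr0 : r ≠ 0 := by
    intro h0
    exact hndvd (by rw [hq] at hrm; exact Dvd.intro q (by omega))
  have hrN : r < N := Nat.mod_lt _ (by omega)
  have hg : ∀ i ≤ e, (A + i * m) / N = A / N + i * δ := by
    intro i hie
    induction i with
    | zero => simp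
    | succ i ih =>
      have hie' : i ≤ e := by omega
      have hwin : cnt (sigmaWord N s) 2 (p + i * m) m = δ := hp i (by omega) 2
      have hadd := cnt_add (sigmaWord N s) 2 0 (p + i * m) m
      rw [zero_add, hwin, pref2 N s hN, pref2 N s hN] at hadd
      rw [show p + i * m + m + (N - 1) = A + (i + 1) * m by rw [hA]; ring,
        show p + i * m + (N - 1) = A + i * m by rw [hA]; ring] at hadd
      rw [hadd, ih hie']
      ring
  have harith : ∀ i : ℕ, (A + i * m) / N = i * q + (A + i * r) / N := by
    intro i
    have h1 : A + i * m = A + i * r + i * q * N := by rw [hrm]; ring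
    rw [h1, Nat.add_mul_div_right _ _ (show 0 < N by omega)]
    omega
  have h1 := hg 1 he
  have he' := hg e le_rfl
  rw [harith 1] at h1
  rw [harith e] at he'
  rw [one_mul, one_mul] at h1
  -- h1 : q + (A + r)/N = A/N + δ
  have hmono : A / N ≤ (A + r) / N := Nat.div_le_div_right (by omega)
  have hup : (A + r) / N ≤ A / N + 1 := by
    have := div_add_ge N (by omega) A r
    have hr' : r / N = 0 := Nat.div_eq_of_lt hrN
    omega
  have hlow : A / N + (e * r) / N ≤ (A + e * r) / N := div_add_le N (by omega) A (e * r)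
  have hhigh : (A + e * r) / N ≤ A / N + (e * r) / N + 1 := div_add_ge N (by omega) A (e * r)
  set a1 := A / N with ha1
  set a2 := (A + r) / N with ha2
  set a3 := (A + e * r) / N with ha3
  set v := (e * r) / N with hv
  clear_value A δ q r a1 a2 a3 v
  rcases (show a2 = a1 ∨ a2 = a1 + 1 by omega) with hη | hη
  · -- δ = q
    have hδq : δ = q := by omega
    rw [hδq] at he'
    -- he' : e*q + (A + e*r)/N = A/N + e*q
    have hz : v = 0 := by omega
    have hlt : e * r < N := by
      rcases Nat.lt_or_ge (e * r) N with h' | h'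
      · exact h'
      · exfalso
        have hd := Nat.div_le_div_right (c := N) h'
        rw [Nat.div_self (show 0 < N by omega), ← hv] at hd
        omega
    have : e ≤ e * r := Nat.le_mul_of_pos_right e (by omega)
    omega
  · -- δ = q + 1
    have hδq : δ = q + 1 := by omega
    rw [hδq, Nat.mul_add, Nat.mul_one] at he'
    -- he' : e*q + (A+e*r)/N = A/N + (e*q + e)
    have hE : e ≤ v + 1 := by omega
    have h2 : N * v ≤ e * r := by rw [hv]; exact Nat.mul_div_le (e * r) N
    have h3 : e * (r + 1) ≤ e * N := Nat.mul_le_mul_left e (by omega)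
    have h4 : e * (r + 1) = e * r + e := by ring
    have h5 : N * e ≤ N * v + N := by
      calc N * e ≤ N * (v + 1) := Nat.mul_le_mul_left N hE
      _ = N * v + N := by ring
    rw [show N * e = e * N from Nat.mul_comm N e] at h5
    omega

lemma abExpSup_sigma_mul (hN : 2 ≤ N) (hNe : Even N) (k : ℕ) :
    AbExpSup (sigmaWord N s) (k * N) = AbExpSup s k := by
  unfold AbExpSup
  have hset : {e : ℕ | IsAbPow (sigmaWord N s) e (k * N)} = {e : ℕ | IsAbPow s e k} :=
    Set.ext fun e => ⟨fun h => isAbPow_of_sigma N s hN hNe h, fun h => isAbPow_sigma_of N s hN h⟩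
  rw [hset]

lemma abExpSup_sigma_le (hN : 2 ≤ N) {m : ℕ} (hndvd : ¬ N ∣ m) :
    AbExpSup (sigmaWord N s) m ≤ (N : ℝ≥0∞) := by
  unfold AbExpSup
  apply iSup₂_le
  intro e heP
  exact_mod_cast Nat.cast_le.2 (exponent_le N s hN hndvd heP)

end AbAux

open AbAux Topology in
/-- For even `N > 0`: if `s` is an infinite binary word with abelian critical
exponent `θ' > 0`, then `σ(s)` has abelian critical exponent `θ' / N`. -/
theorem abCritExp_sigmaWord (N : ℕ) (hN : 0 < N) (hNe : Even N)
    (s : ℕ → Fin 2) (θ' : ℝ) (hθ : 0 < θ')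
    (hs : AbCritExp s = ENNReal.ofReal θ') :
    AbCritExp (sigmaWord N s) = ENNReal.ofReal (θ' / N) := by
  have hN2 : 2 ≤ N := by
    obtain ⟨w, hw⟩ := hNe; omega
  have hNtop : (N : ℝ≥0∞) ≠ ⊤ := ENNReal.natCast_ne_top N
  have hN0 : (N : ℝ≥0∞) ≠ 0 := by exact_mod_cast (show N ≠ 0 by omega)
  have hNinvtop : (N : ℝ≥0∞)⁻¹ ≠ ⊤ := by
    simp [ENNReal.inv_ne_top, hN0]
  set F : ℕ → ℝ≥0∞ := fun m => AbExpSup (sigmaWord N s) m / m with hF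
  set G : ℕ → ℝ≥0∞ := fun k => AbExpSup s k / k with hG
  have hGls : Filter.atTop.limsup G = ENNReal.ofReal θ' := hs
  have hFkN : ∀ k : ℕ, F (k * N) = (N : ℝ≥0∞)⁻¹ * G k := by
    intro k
    show AbExpSup (sigmaWord N s) (k * N) / ((k * N : ℕ) : ℝ≥0∞) = _
    rw [abExpSup_sigma_mul N s hN2 hNe k, Nat.cast_mul]
    rw [div_eq_mul_inv, ENNReal.mul_inv (Or.inr hNtop) (Or.inl (ENNReal.natCast_ne_top k))]
    show _ = _ * (AbExpSup s k / (k : ℝ≥0∞))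
    rw [div_eq_mul_inv]
    ring
  have hlow : (N : ℝ≥0∞)⁻¹ * ENNReal.ofReal θ' ≤ Filter.atTop.limsup F := by
    have hmap : Filter.Tendsto (fun k : ℕ => k * N) Filter.atTop Filter.atTop :=
      Filter.tendsto_atTop_atTop.2 fun b =>
        ⟨b, fun a ha => le_trans ha (Nat.le_mul_of_pos_right a (by omega))⟩
    calc (N : ℝ≥0∞)⁻¹ * ENNReal.ofReal θ'
        = (N : ℝ≥0∞)⁻¹ * Filter.atTop.limsup G := by rw [hGls]
      _ = Filter.atTop.limsup (fun k => (N : ℝ≥0∞)⁻¹ * G k) :=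
          (ENNReal.limsup_const_mul_of_ne_top hNinvtop).symm
      _ = Filter.atTop.limsup (F ∘ fun k : ℕ => k * N) := by
          congr 1
          funext k
          exact (hFkN k).symm
      _ = Filter.limsup F (Filter.map (fun k : ℕ => k * N) Filter.atTop) :=
          Filter.limsup_comp F _ _
      _ ≤ Filter.limsup F Filter.atTop := Filter.limsup_le_limsup_of_le hmap
  have hup : Filter.atTop.limsup F ≤ (N : ℝ≥0∞)⁻¹ * ENNReal.ofReal θ' := by
    have hFle : ∀ m : ℕ,
        F m ≤ max ((N : ℝ≥0∞)⁻¹ * G (m / N)) ((N : ℝ≥0∞) / (m : ℝ≥0∞)) := by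
      intro m
      by_cases hdvd : N ∣ m
      · obtain ⟨k, rfl⟩ := hdvd
        refine le_max_of_le_left ?_
        have hkk : N * k / N = k := by
          simp [Nat.mul_div_cancel_left, show 0 < N by omega]
        rw [hkk, show N * k = k * N from mul_comm N k, hFkN k]
      · refine le_max_of_le_right ?_
        exact ENNReal.div_le_div_right (abExpSup_sigma_le N s hN2 hdvd) _
    have hright : Filter.atTop.limsup (fun m : ℕ => (N : ℝ≥0∞) / (m : ℝ≥0∞)) = 0 := by
      apply Filter.Tendsto.limsup_eq
      have h1 : Filter.Tendsto (fun m : ℕ => ((m : ℝ≥0∞))⁻¹) Filter.atTop (𝓝 0) :=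
        ENNReal.tendsto_inv_nat_nhds_zero
      have h2 := ENNReal.Tendsto.const_mul (a := (N : ℝ≥0∞)) h1 (Or.inr hNtop)
      simpa only [mul_zero, div_eq_mul_inv] using h2
    have hleft : Filter.atTop.limsup (fun m : ℕ => (N : ℝ≥0∞)⁻¹ * G (m / N))
        = (N : ℝ≥0∞)⁻¹ * ENNReal.ofReal θ' := by
      rw [ENNReal.limsup_const_mul_of_ne_top hNinvtop]
      congr 1
      have : Filter.atTop.limsup (fun m : ℕ => G (m / N))
          = Filter.limsup G (Filter.map (fun m : ℕ => m / N) Filter.atTop) :=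
        Filter.limsup_comp G _ _
      rw [this, Filter.map_div_atTop_eq_nat N (by omega), hGls]
    calc Filter.atTop.limsup F
        ≤ Filter.atTop.limsup
            (fun m : ℕ => max ((N : ℝ≥0∞)⁻¹ * G (m / N)) ((N : ℝ≥0∞) / (m : ℝ≥0∞))) :=
          Filter.limsup_le_limsup (Filter.Eventually.of_forall hFle)
      _ = max (Filter.atTop.limsup (fun m : ℕ => (N : ℝ≥0∞)⁻¹ * G (m / N)))
            (Filter.atTop.limsup (fun m : ℕ => (N : ℝ≥0∞) / (m : ℝ≥0∞))) :=
          limsup_max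
      _ = (N : ℝ≥0∞)⁻¹ * ENNReal.ofReal θ' := by
          rw [hright, hleft, max_eq_left zero_le]
  have hfin : Filter.atTop.limsup F = (N : ℝ≥0∞)⁻¹ * ENNReal.ofReal θ' :=
    le_antisymm hup hlow
  show Filter.atTop.limsup F = ENNReal.ofReal (θ' / N)
  rw [hfin, ENNReal.ofReal_div_of_pos (show (0 : ℝ) < (N : ℝ) by exact_mod_cast hN),
    ENNReal.ofReal_natCast, div_eq_mul_inv, mul_comm]
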